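/- arXiv:2309.04028 — 6 statements merged into one kernel-verified Lean document; each statement's English description precedes it below -/
import Mathlib

section
/- Let q₁,…,qₙ ∈ ℂ⁴ be such that every subset of at most four of them is linearly independent, and let p₁,…,pₙ ∈ ℂ³ all be nonzero. If the focal matrix M(q,p) has a nontrivial kernel, then there exist a sequence of 3×4 complex matrices A⁽ᵏ⁾ (k ∈ ℕ) and nonzero scalars μ_j^{(k)} ∈ ℂ such that for every j = 1,…,n, the vectors μ_j^{(k)}·(A⁽ᵏ⁾·q_j) converge to p_j in ℂ³ as k → ∞. In other words, every tuple (p₁,…,pₙ) satisfying the focal rank constraint lies in the Euclidean closure of the set of tuples of (projective) images of q₁,…,qₙ under a single pinhole camera. -/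
open Matrix Filter Topology

/-- For `q ∈ ℂ⁴`, the 3×12 matrix `Q(q) = I₃ ⊗ qᵀ`. -/
def Qmat (q : Fin 4 → ℂ) : Matrix (Fin 3) (Fin 3 × Fin 4) ℂ :=
  Matrix.of fun i jk => if jk.1 = i then q jk.2 else 0

/-- The `3n × (12 + n)` focal matrix `M(q,p)`. -/
def focalMatrix (n : ℕ) (q : Fin n → Fin 4 → ℂ) (p : Fin n → Fin 3 → ℂ) :
    Matrix (Fin n × Fin 3) ((Fin 3 × Fin 4) ⊕ Fin n) ℂ :=
  Matrix.of fun ji =>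
    Sum.elim (fun ck => if ck.1 = ji.2 then q ji.1 ck.2 else 0)
             (fun j' => if j' = ji.1 then p ji.1 ji.2 else 0)

private lemma sumExtend_inl {K V ι : Type*} [Field K] [AddCommGroup V] [Module K V]
    (v : ι → V) (hs : LinearIndependent K v) (i : ι) :
    Module.Basis.sumExtend hs (Sum.inl i) = v i := by
  simp only [Module.Basis.sumExtend, Module.Basis.reindex_apply, Equiv.symm_symm, Trans.trans,
    Equiv.trans_apply, Equiv.sumCongr_apply, Sum.map_inl,
    Equiv.Set.sumDiffSubset_apply_inl]
  rw [Module.Basis.extend_apply_self]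
  rfl

/-- Existence of a linear map with prescribed values on a linearly independent family. -/
private lemma exists_linearMap_prescribed {K V W ι : Type*} [Field K]
    [AddCommGroup V] [Module K V] [AddCommGroup W] [Module K W]
    (v : ι → V) (hs : LinearIndependent K v) (w : ι → W) :
    ∃ f : V →ₗ[K] W, ∀ i, f (v i) = w i := by
  refine ⟨(Module.Basis.sumExtend hs).constr K (Sum.elim w 0), fun i => ?_⟩
  have := (Module.Basis.sumExtend hs).constr_basis K (Sum.elim w 0) (Sum.inl i)
  rwa [sumExtend_inl] at this

private lemma tendsto_inv_natCast_add_one :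
    Tendsto (fun k : ℕ => (((k : ℂ) + 1)⁻¹)) atTop (𝓝 0) := by
  have h : Tendsto (fun k : ℕ => (((k : ℝ) + 1)⁻¹)) atTop (𝓝 0) :=
    tendsto_one_div_add_atTop_nhds_zero_nat.congr (by intro k; rw [one_div])
  have := (Complex.continuous_ofReal.tendsto 0).comp h
  simpa [Function.comp_def] using this

/-- If every subset of at most four of the `q_j` is linearly independent, all
`p_j` are nonzero, and the focal matrix `M(q,p)` has a nontrivial kernel, then
there are cameras `A⁽ᵏ⁾` and nonzero scalars `μ_j^{(k)}` with
`μ_j^{(k)} • (A⁽ᵏ⁾ q_j) → p_j` for every `j`: every tuple satisfying the focal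
rank constraint lies in the closure of the set of image tuples of one camera. -/
theorem focal_kernel_implies_closure (n : ℕ)
    (q : Fin n → Fin 4 → ℂ) (p : Fin n → Fin 3 → ℂ)
    (hq : ∀ s : Finset (Fin n), s.card ≤ 4 →
      LinearIndependent ℂ (fun j : s => q j))
    (hp : ∀ j, p j ≠ 0)
    (hker : ∃ v : ((Fin 3 × Fin 4) ⊕ Fin n) → ℂ, v ≠ 0 ∧
      (focalMatrix n q p).mulVec v = 0) :
    ∃ (A : ℕ → Matrix (Fin 3) (Fin 4) ℂ) (μ : ℕ → Fin n → ℂ),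
      (∀ k j, μ k j ≠ 0) ∧
      ∀ j, Tendsto (fun k => μ k j • (A k).mulVec (q j)) atTop (𝓝 (p j)) := by
  obtain ⟨v, hv0, hv⟩ := hker
  set A : Matrix (Fin 3) (Fin 4) ℂ := Matrix.of fun i k => v (Sum.inl (i, k)) with hA
  set lam : Fin n → ℂ := fun j => v (Sum.inr j) with hlam
  -- the basic equation: A q_j = -lam_j • p_j
  have key : ∀ j, A.mulVec (q j) = -(lam j) • p j := by
    intro j
    funext i
    have h := congrFun hv (j, i)
    simp only [Matrix.mulVec, dotProduct, focalMatrix, Matrix.of_apply,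
      Fintype.sum_sum_type, Sum.elim_inl, Sum.elim_inr, Pi.zero_apply] at h
    have h1 : ∑ x : Fin 3 × Fin 4, (if x.1 = i then q j x.2 else 0) * v (Sum.inl x)
        = ∑ k : Fin 4, q j k * v (Sum.inl (i, k)) := by
      rw [Fintype.sum_prod_type]
      rw [Finset.sum_eq_single i]
      · simp
      · intro b _ hb
        simp [hb]
      · simp
    have h2 : ∑ j' : Fin n, (if j' = j then p j i else 0) * v (Sum.inr j')
        = p j i * lam j := by
      rw [Finset.sum_eq_single j]
      · simp [hlam, mul_comm]
      · intro b _ hb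
        simp [hb]
      · simp
    rw [h1, h2] at h
    have : ∑ k : Fin 4, q j k * v (Sum.inl (i, k)) = -(lam j) * p j i := by
      linear_combination h
    simp only [Matrix.mulVec, dotProduct, Pi.smul_apply, smul_eq_mul]
    rw [← this]
    apply Finset.sum_congr rfl
    intro k _
    simp [hA, mul_comm]
  -- A ≠ 0
  have hAne : A ≠ 0 := by
    intro hA0
    apply hv0
    funext x
    rcases x with ⟨i, k⟩ | j
    · have : A i k = 0 := by rw [hA0]; rfl
      simpa [hA] using this
    · have hz := key j
      rw [hA0] at hz
      simp only [Matrix.zero_mulVec] at hz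
      rcases smul_eq_zero.mp hz.symm with h' | h'
      · exact neg_eq_zero.mp h'
      · exact absurd h' (hp j)
  -- the set of indices with lam j = 0
  classical
  set S : Finset (Fin n) := Finset.univ.filter (fun j => lam j = 0) with hS
  -- S has at most 4 elements
  have hScard : S.card ≤ 4 := by
    by_contra hc
    push_neg at hc
    obtain ⟨T, hTS, hT4⟩ := Finset.exists_subset_card_eq (le_of_lt (by omega : 4 < S.card))
    have hli : LinearIndependent ℂ (fun j : T => q j) := hq T (le_of_eq hT4)
    have hTne : T.Nonempty := Finset.card_pos.mp (by omega)
    haveI : Nonempty T := ⟨⟨hTne.choose, hTne.choose_spec⟩⟩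
    have hspan : Submodule.span ℂ (Set.range (fun j : T => q j)) = ⊤ := by
      apply hli.span_eq_top_of_card_eq_finrank
      simp [hT4, Module.finrank_fintype_fun_eq_card]
    -- A vanishes on each q j for j ∈ T
    have hzero : ∀ j : T, A.mulVecLin (q j) = 0 := by
      intro j
      have hjS : (j : Fin n) ∈ S := hTS j.2
      have : lam j = 0 := by simpa [hS] using hjS
      simp [Matrix.mulVecLin_apply, key, this]
    have htop : (⊤ : Submodule ℂ (Fin 4 → ℂ)) ≤ LinearMap.ker A.mulVecLin := by
      rw [← hspan]
      rw [Submodule.span_le]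
      rintro x ⟨j, rfl⟩
      exact hzero j
    apply hAne
    ext i k
    have : A.mulVecLin (Pi.single k 1) = 0 := htop (Submodule.mem_top)
    have := congrFun this i
    simpa [Matrix.mulVecLin_apply, Matrix.mulVec_single] using this
  -- linear independence of q on S
  have hliS : LinearIndependent ℂ (fun j : S => q j) := hq S hScard
  -- construct B with B q_j = p_j for j ∈ S
  obtain ⟨f, hf⟩ := exists_linearMap_prescribed (fun j : S => q j) hliS (fun j : S => p j)
  set B : Matrix (Fin 3) (Fin 4) ℂ := LinearMap.toMatrix' f with hB
  have hBmul : ∀ x, B.mulVec x = f x := by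
    intro x
    rw [hB, ← Matrix.toLin'_apply, Matrix.toLin'_toMatrix']
  refine ⟨fun k => A + (((k : ℂ) + 1)⁻¹) • B,
    fun k j => if lam j = 0 then (k : ℂ) + 1 else -(lam j)⁻¹, fun k j => ?_, fun j => ?_⟩
  · by_cases h : lam j = 0
    · simp only [h, if_true]
      exact Nat.cast_add_one_ne_zero k
    · simp [h]
  · have hk1 : ∀ k : ℕ, ((k : ℂ) + 1) ≠ 0 := fun k => Nat.cast_add_one_ne_zero k
    by_cases h : lam j = 0
    · -- j ∈ S : the sequence is constantly p j
      have hjS : j ∈ S := by simp [hS, h]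
      have hAq : A.mulVec (q j) = 0 := by simp [key, h]
      have hBq : B.mulVec (q j) = p j := by
        rw [hBmul]
        exact hf ⟨j, hjS⟩
      have : ∀ k : ℕ, (if lam j = 0 then (k : ℂ) + 1 else -(lam j)⁻¹) •
          (A + (((k : ℂ) + 1)⁻¹) • B).mulVec (q j) = p j := by
        intro k
        simp only [h, if_true, Matrix.add_mulVec, hAq, Matrix.smul_mulVec, hBq, zero_add,
          smul_smul]
        rw [mul_inv_cancel₀ (hk1 k), one_smul]
      simp only [this]
      exact tendsto_const_nhds
    · -- j ∉ S
      have heq : ∀ k : ℕ, (if lam j = 0 then (k : ℂ) + 1 else -(lam j)⁻¹) •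
          (A + (((k : ℂ) + 1)⁻¹) • B).mulVec (q j)
          = p j + ((-(lam j)⁻¹) * (((k : ℂ) + 1)⁻¹)) • B.mulVec (q j) := by
        intro k
        simp only [h, if_false, Matrix.add_mulVec, Matrix.smul_mulVec, key, smul_add,
          smul_smul]
        congr 1
        rw [show -(lam j)⁻¹ * -lam j = (1:ℂ) from by field_simp, one_smul]
      simp only [heq]
      have h1 : Tendsto (fun k : ℕ => ((-(lam j)⁻¹) * (((k : ℂ) + 1)⁻¹))) atTop (𝓝 0) := by
        have := tendsto_inv_natCast_add_one.const_mul (-(lam j)⁻¹)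
        simpa using this
      have h2 : Tendsto (fun k : ℕ => ((-(lam j)⁻¹) * (((k : ℂ) + 1)⁻¹)) • B.mulVec (q j))
          atTop (𝓝 0) := by
        have := h1.smul (tendsto_const_nhds (x := B.mulVec (q j)))
        simpa using this
      have := tendsto_const_nhds (x := p j) (f := atTop (α := ℕ)) |>.add h2
      simpa using this
end

section
/- For a = (a₁,a₂,a₃,a₄) ∈ ℂ⁴, the reduced camera matrix A(a) has rank 3 if and only if at most one of the coordinates a₁, a₂, a₃, a₄ is zero. -/
open Matrix

/-- The reduced camera matrix `A(a)`. -/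
def Ared (a : Fin 4 → ℂ) : Matrix (Fin 3) (Fin 4) ℂ :=
  !![a 0, 0, 0, a 3;
     0, a 1, 0, a 3;
     0, 0, a 2, a 3]

lemma aux_le_two (A : Matrix (Fin 3) (Fin 4) ℂ) (B : Matrix (Fin 3) (Fin 2) ℂ)
    (C : Matrix (Fin 2) (Fin 4) ℂ) (h : A = B * C) : A.rank ≤ 2 := by
  rw [h]
  exact le_trans (rank_mul_le_right _ _) (by simpa using rank_le_card_height C)

lemma aux_eq_three (A : Matrix (Fin 3) (Fin 4) ℂ) (B : Matrix (Fin 4) (Fin 3) ℂ)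
    (h : (A * B).det ≠ 0) : A.rank = 3 := by
  have h1 : (A * B).rank = 3 := by
    rw [rank_of_isUnit _ ((Matrix.isUnit_iff_isUnit_det _).2 h.isUnit)]
    simp
  have h2 : (A * B).rank ≤ A.rank := rank_mul_le_left _ _
  have h3 : A.rank ≤ 3 := by simpa using rank_le_card_height A
  omega

lemma le01 (a : Fin 4 → ℂ) (h0 : a 0 = 0) (h1 : a 1 = 0) : (Ared a).rank ≤ 2 :=
  aux_le_two _ (!![1,0;1,0;0,1] : Matrix (Fin 3) (Fin 2) ℂ) !![0,0,0,a 3; 0,0,a 2,a 3] (by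
    ext i j; fin_cases i <;> fin_cases j <;>
      simp [Ared, Matrix.mul_apply, Fin.sum_univ_two, Matrix.vecHead, Matrix.vecTail, h0, h1])

lemma le02 (a : Fin 4 → ℂ) (h0 : a 0 = 0) (h2 : a 2 = 0) : (Ared a).rank ≤ 2 :=
  aux_le_two _ (!![0,1;1,0;0,1] : Matrix (Fin 3) (Fin 2) ℂ) !![0,a 1,0,a 3; 0,0,0,a 3] (by
    ext i j; fin_cases i <;> fin_cases j <;>
      simp [Ared, Matrix.mul_apply, Fin.sum_univ_two, Matrix.vecHead, Matrix.vecTail, h0, h2])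

lemma le12 (a : Fin 4 → ℂ) (h1 : a 1 = 0) (h2 : a 2 = 0) : (Ared a).rank ≤ 2 :=
  aux_le_two _ (!![1,0;0,1;0,1] : Matrix (Fin 3) (Fin 2) ℂ) !![a 0,0,0,a 3; 0,0,0,a 3] (by
    ext i j; fin_cases i <;> fin_cases j <;>
      simp [Ared, Matrix.mul_apply, Fin.sum_univ_two, Matrix.vecHead, Matrix.vecTail, h1, h2])

lemma le03 (a : Fin 4 → ℂ) (h0 : a 0 = 0) (h3 : a 3 = 0) : (Ared a).rank ≤ 2 :=
  aux_le_two _ (!![0,0;1,0;0,1] : Matrix (Fin 3) (Fin 2) ℂ) !![0,a 1,0,0; 0,0,a 2,0] (by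
    ext i j; fin_cases i <;> fin_cases j <;>
      simp [Ared, Matrix.mul_apply, Fin.sum_univ_two, Matrix.vecHead, Matrix.vecTail, h0, h3])

lemma le13 (a : Fin 4 → ℂ) (h1 : a 1 = 0) (h3 : a 3 = 0) : (Ared a).rank ≤ 2 :=
  aux_le_two _ (!![1,0;0,0;0,1] : Matrix (Fin 3) (Fin 2) ℂ) !![a 0,0,0,0; 0,0,a 2,0] (by
    ext i j; fin_cases i <;> fin_cases j <;>
      simp [Ared, Matrix.mul_apply, Fin.sum_univ_two, Matrix.vecHead, Matrix.vecTail, h1, h3])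

lemma le23 (a : Fin 4 → ℂ) (h2 : a 2 = 0) (h3 : a 3 = 0) : (Ared a).rank ≤ 2 :=
  aux_le_two _ (!![1,0;0,1;0,0] : Matrix (Fin 3) (Fin 2) ℂ) !![a 0,0,0,0; 0,a 1,0,0] (by
    ext i j; fin_cases i <;> fin_cases j <;>
      simp [Ared, Matrix.mul_apply, Fin.sum_univ_two, Matrix.vecHead, Matrix.vecTail, h2, h3])

/-- For `a ∈ ℂ⁴`, the reduced camera matrix `A(a)` has rank 3 if and only if at
most one of the coordinates of `a` is zero. -/
theorem Ared_rank_eq_three_iff (a : Fin 4 → ℂ) :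
    (Ared a).rank = 3 ↔ Set.ncard {i : Fin 4 | a i = 0} ≤ 1 := by
  constructor
  · intro h
    rw [Set.ncard_le_one_iff]
    rintro i j (hi : a i = 0) (hj : a j = 0)
    by_contra hij
    have hle : (Ared a).rank ≤ 2 := by
      fin_cases i <;> fin_cases j <;>
        first
          | exact absurd rfl hij
          | exact le01 a hi hj | exact le01 a hj hi
          | exact le02 a hi hj | exact le02 a hj hi
          | exact le12 a hi hj | exact le12 a hj hi
          | exact le03 a hi hj | exact le03 a hj hi
          | exact le13 a hi hj | exact le13 a hj hi
          | exact le23 a hi hj | exact le23 a hj hi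
    omega
  · intro h
    rw [Set.ncard_le_one_iff] at h
    by_cases h0 : a 0 = 0
    · have h1 : a 1 ≠ 0 := fun h1 => by simpa using h h0 h1
      have h2 : a 2 ≠ 0 := fun h2 => by simpa using h h0 h2
      have h3 : a 3 ≠ 0 := fun h3 => by simpa using h h0 h3
      apply aux_eq_three _ (!![0,0,0;1,0,0;0,1,0;0,0,1] : Matrix (Fin 4) (Fin 3) ℂ)
      have e : Ared a * (!![0,0,0;1,0,0;0,1,0;0,0,1] : Matrix (Fin 4) (Fin 3) ℂ)
          = !![0,0,a 3; a 1,0,a 3; 0,a 2,a 3] := by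
        ext i j; fin_cases i <;> fin_cases j <;>
          simp [Ared, Matrix.mul_apply, Fin.sum_univ_four, Matrix.vecHead, Matrix.vecTail]
      rw [e, Matrix.det_fin_three]
      simp [Matrix.vecHead, Matrix.vecTail, h1, h2, h3]
    by_cases h1 : a 1 = 0
    · have h2 : a 2 ≠ 0 := fun h2 => by simpa using h h1 h2
      have h3 : a 3 ≠ 0 := fun h3 => by simpa using h h1 h3
      apply aux_eq_three _ (!![1,0,0;0,0,0;0,1,0;0,0,1] : Matrix (Fin 4) (Fin 3) ℂ)
      have e : Ared a * (!![1,0,0;0,0,0;0,1,0;0,0,1] : Matrix (Fin 4) (Fin 3) ℂ)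
          = !![a 0,0,a 3; 0,0,a 3; 0,a 2,a 3] := by
        ext i j; fin_cases i <;> fin_cases j <;>
          simp [Ared, Matrix.mul_apply, Fin.sum_univ_four, Matrix.vecHead, Matrix.vecTail]
      rw [e, Matrix.det_fin_three]
      simp [Matrix.vecHead, Matrix.vecTail, h0, h2, h3]
    by_cases h2 : a 2 = 0
    · have h3 : a 3 ≠ 0 := fun h3 => by simpa using h h2 h3
      apply aux_eq_three _ (!![1,0,0;0,1,0;0,0,0;0,0,1] : Matrix (Fin 4) (Fin 3) ℂ)
      have e : Ared a * (!![1,0,0;0,1,0;0,0,0;0,0,1] : Matrix (Fin 4) (Fin 3) ℂ)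
          = !![a 0,0,a 3; 0,a 1,a 3; 0,0,a 3] := by
        ext i j; fin_cases i <;> fin_cases j <;>
          simp [Ared, Matrix.mul_apply, Fin.sum_univ_four, Matrix.vecHead, Matrix.vecTail]
      rw [e, Matrix.det_fin_three]
      simp [Matrix.vecHead, Matrix.vecTail, h0, h1, h3]
    · apply aux_eq_three _ (!![1,0,0;0,1,0;0,0,1;0,0,0] : Matrix (Fin 4) (Fin 3) ℂ)
      have e : Ared a * (!![1,0,0;0,1,0;0,0,1;0,0,0] : Matrix (Fin 4) (Fin 3) ℂ)
          = !![a 0,0,0; 0,a 1,0; 0,0,a 2] := by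
        ext i j; fin_cases i <;> fin_cases j <;>
          simp [Ared, Matrix.mul_apply, Fin.sum_univ_four, Matrix.vecHead, Matrix.vecTail]
      rw [e, Matrix.det_fin_three]
      simp [Matrix.vecHead, Matrix.vecTail, h0, h1, h2]
end

section
/- For every a = (a₁,a₂,a₃,a₄) ∈ ℂ⁴, the vector κ(a) = (a₂a₃a₄, a₁a₃a₄, a₁a₂a₄, −a₁a₂a₃) satisfies A(a)·κ(a) = 0. Moreover, if at most one of the coordinates of a is zero, then κ(a) ≠ 0 and the kernel of the linear map ℂ⁴ → ℂ³ given by A(a) is exactly the one-dimensional span of κ(a); that is, the center of the reduced camera A(a) is the Cremona image of a. -/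
open Matrix

/-- A homogeneous representative `κ(a) = (a₂a₃a₄, a₁a₃a₄, a₁a₂a₄, −a₁a₂a₃)` of the
Cremona image of `a`. -/
def kvec (a : Fin 4 → ℂ) : Fin 4 → ℂ :=
  ![a 1 * a 2 * a 3, a 0 * a 2 * a 3, a 0 * a 1 * a 3, -(a 0 * a 1 * a 2)]

lemma kvec_mulVec (a : Fin 4 → ℂ) : (Ared a).mulVec (kvec a) = 0 := by
  funext i; fin_cases i <;>
    simp [Ared, kvec, mulVec, dotProduct, Fin.sum_univ_four] <;> ring

lemma ker_eq_of (a : Fin 4 → ℂ)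
    (h : ∀ x : Fin 4 → ℂ, a 0 * x 0 + a 3 * x 3 = 0 → a 1 * x 1 + a 3 * x 3 = 0 →
      a 2 * x 2 + a 3 * x 3 = 0 → ∃ c : ℂ, c • kvec a = x) :
    LinearMap.ker (Ared a).mulVecLin = Submodule.span ℂ {kvec a} := by
  apply le_antisymm
  · intro x hx
    rw [LinearMap.mem_ker, mulVecLin_apply] at hx
    have e0 := congrFun hx 0
    have e1 := congrFun hx 1
    have e2 := congrFun hx 2
    simp [Ared, mulVec, dotProduct, Fin.sum_univ_four] at e0 e1 e2
    rw [Submodule.mem_span_singleton]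
    exact h x e0 e1 e2
  · rw [Submodule.span_le, Set.singleton_subset_iff]
    simpa [LinearMap.mem_ker] using kvec_mulVec a

/-- `A(a)·κ(a) = 0` always; and if at most one coordinate of `a` is zero then
`κ(a) ≠ 0` and the kernel of `A(a)` is exactly the span of `κ(a)`: the center of
the reduced camera `A(a)` is the Cremona image of `a`. -/
theorem center_of_reduced_camera (a : Fin 4 → ℂ) :
    (Ared a).mulVec (kvec a) = 0 ∧
    (Set.ncard {i : Fin 4 | a i = 0} ≤ 1 →
      kvec a ≠ 0 ∧
      LinearMap.ker (Ared a).mulVecLin = Submodule.span ℂ {kvec a}) := by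
  refine ⟨kvec_mulVec a, fun hcard => ?_⟩
  have hpair : ∀ i j : Fin 4, a i = 0 → a j = 0 → i = j := by
    intro i j hi hj
    by_contra hne
    have hsub : ({i, j} : Set (Fin 4)) ⊆ {k | a k = 0} := by
      intro k hk
      rcases hk with hk | hk <;> simp_all
    have h2 : 2 ≤ Set.ncard {k : Fin 4 | a k = 0} := by
      calc 2 = ({i, j} : Set (Fin 4)).ncard := (Set.ncard_pair hne).symm
        _ ≤ _ := Set.ncard_le_ncard hsub (Set.toFinite _)
    omega
  by_cases h0 : a 0 = 0 <;> by_cases h1 : a 1 = 0 <;> by_cases h2 : a 2 = 0 <;>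
    by_cases h3 : a 3 = 0
  -- kill all cases with two zeros
  all_goals try { exact absurd (hpair _ _ ‹a 0 = 0› ‹a 1 = 0›) (by decide) }
  all_goals try { exact absurd (hpair _ _ ‹a 0 = 0› ‹a 2 = 0›) (by decide) }
  all_goals try { exact absurd (hpair _ _ ‹a 0 = 0› ‹a 3 = 0›) (by decide) }
  all_goals try { exact absurd (hpair _ _ ‹a 1 = 0› ‹a 2 = 0›) (by decide) }
  all_goals try { exact absurd (hpair _ _ ‹a 1 = 0› ‹a 3 = 0›) (by decide) }
  all_goals try { exact absurd (hpair _ _ ‹a 2 = 0› ‹a 3 = 0›) (by decide) }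
  -- case a 0 = 0, others nonzero
  · refine ⟨fun hk => ?_, ker_eq_of a fun x e0 e1 e2 => ?_⟩
    · have := congrFun hk 0
      simp [kvec, h1, h2, h3] at this
    · refine ⟨x 0 / (a 1 * a 2 * a 3), funext fun i => ?_⟩
      have hx3 : x 3 = 0 := by
        rw [h0, zero_mul, zero_add] at e0
        exact (mul_eq_zero.mp e0).resolve_left h3
      have hx1 : x 1 = 0 := by
        rw [hx3, mul_zero, add_zero] at e1
        exact (mul_eq_zero.mp e1).resolve_left h1
      have hx2 : x 2 = 0 := by
        rw [hx3, mul_zero, add_zero] at e2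
        exact (mul_eq_zero.mp e2).resolve_left h2
      fin_cases i <;> simp [kvec, h0, hx1, hx2, hx3] <;> field_simp
  -- case a 1 = 0, others nonzero
  · refine ⟨fun hk => ?_, ker_eq_of a fun x e0 e1 e2 => ?_⟩
    · have := congrFun hk 1
      simp [kvec, h0, h2, h3] at this
    · refine ⟨x 1 / (a 0 * a 2 * a 3), funext fun i => ?_⟩
      have hx3 : x 3 = 0 := by
        rw [h1, zero_mul, zero_add] at e1
        exact (mul_eq_zero.mp e1).resolve_left h3
      have hx0 : x 0 = 0 := by
        rw [hx3, mul_zero, add_zero] at e0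
        exact (mul_eq_zero.mp e0).resolve_left h0
      have hx2 : x 2 = 0 := by
        rw [hx3, mul_zero, add_zero] at e2
        exact (mul_eq_zero.mp e2).resolve_left h2
      fin_cases i <;> simp [kvec, h1, hx0, hx2, hx3] <;> field_simp <;> ring
  -- case a 2 = 0, others nonzero
  · refine ⟨fun hk => ?_, ker_eq_of a fun x e0 e1 e2 => ?_⟩
    · have := congrFun hk 2
      simp [kvec, h0, h1, h3] at this
    · refine ⟨x 2 / (a 0 * a 1 * a 3), funext fun i => ?_⟩
      have hx3 : x 3 = 0 := by
        rw [h2, zero_mul, zero_add] at e2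
        exact (mul_eq_zero.mp e2).resolve_left h3
      have hx0 : x 0 = 0 := by
        rw [hx3, mul_zero, add_zero] at e0
        exact (mul_eq_zero.mp e0).resolve_left h0
      have hx1 : x 1 = 0 := by
        rw [hx3, mul_zero, add_zero] at e1
        exact (mul_eq_zero.mp e1).resolve_left h1
      fin_cases i <;> simp [kvec, h2, hx0, hx1, hx3] <;> field_simp <;> ring
  -- case a 3 = 0, others nonzero
  · refine ⟨fun hk => ?_, ker_eq_of a fun x e0 e1 e2 => ?_⟩
    · have := congrFun hk 3
      simp [kvec, h0, h1, h2] at this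
    · refine ⟨-(x 3) / (a 0 * a 1 * a 2), funext fun i => ?_⟩
      have hx0 : x 0 = 0 := by
        rw [h3, zero_mul, add_zero] at e0
        exact (mul_eq_zero.mp e0).resolve_left h0
      have hx1 : x 1 = 0 := by
        rw [h3, zero_mul, add_zero] at e1
        exact (mul_eq_zero.mp e1).resolve_left h1
      have hx2 : x 2 = 0 := by
        rw [h3, zero_mul, add_zero] at e2
        exact (mul_eq_zero.mp e2).resolve_left h2
      fin_cases i <;> simp [kvec, h3, hx0, hx1, hx2] <;> field_simp
  -- case all nonzero
  · refine ⟨fun hk => ?_, ker_eq_of a fun x e0 e1 e2 => ?_⟩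
    · have := congrFun hk 3
      simp [kvec, h0, h1, h2] at this
    · have hd : a 0 * a 1 * a 2 ≠ 0 := by
        exact mul_ne_zero (mul_ne_zero h0 h1) h2
      refine ⟨-(x 3) / (a 0 * a 1 * a 2), ?_⟩
      funext i
      fin_cases i
      · show -(x 3) / (a 0 * a 1 * a 2) * (a 1 * a 2 * a 3) = x 0
        rw [div_mul_eq_mul_div, div_eq_iff hd]
        linear_combination (-(a 1 * a 2)) * e0
      · show -(x 3) / (a 0 * a 1 * a 2) * (a 0 * a 2 * a 3) = x 1
        rw [div_mul_eq_mul_div, div_eq_iff hd]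
        linear_combination (-(a 0 * a 2)) * e1
      · show -(x 3) / (a 0 * a 1 * a 2) * (a 0 * a 1 * a 3) = x 2
        rw [div_mul_eq_mul_div, div_eq_iff hd]
        linear_combination (-(a 0 * a 1)) * e2
      · show -(x 3) / (a 0 * a 1 * a 2) * -(a 0 * a 1 * a 2) = x 3
        rw [div_mul_eq_mul_div, div_eq_iff hd]
        ring
end

section
/- There exists a sign ε ∈ {1, −1}, independent of the data, such that for all q₁, q₂ ∈ ℂ⁴ and p₁, p₂ ∈ ℂ³, the determinant of the 6×6 matrix [A(q₁), p₁, 0; A(q₂), 0, p₂] equals ε·p₁ᵀ·F(q₁,q₂)·p₂, where F(q₁,q₂) is the 3×3 dual fundamental matrix with entries: F₁₁ = F₂₂ = F₃₃ = 0; F₁₂ = q₁[2]q₂[1](q₁[4]q₂[3] − q₁[3]q₂[4]); F₁₃ = q₁[3]q₂[1](q₁[2]q₂[4] − q₁[4]q₂[2]); F₂₁ = q₁[1]q₂[2](q₁[3]q₂[4] − q₁[4]q₂[3]); F₂₃ = q₁[3]q₂[2](q₁[4]q₂[1] − q₁[1]q₂[4]); F₃₁ = q₁[1]q₂[3](q₁[4]q₂[2]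 − q₁[2]q₂[4]); F₃₂ = q₁[2]q₂[3](q₁[1]q₂[4] − q₁[4]q₂[1]). -/
open Matrix

/-- The 6×6 matrix `[A(q₁), p₁, 0; A(q₂), 0, p₂]`. -/
def sixMat (q1 q2 : Fin 4 → ℂ) (p1 p2 : Fin 3 → ℂ) : Matrix (Fin 6) (Fin 6) ℂ :=
  !![q1 0, 0, 0, q1 3, p1 0, 0;
     0, q1 1, 0, q1 3, p1 1, 0;
     0, 0, q1 2, q1 3, p1 2, 0;
     q2 0, 0, 0, q2 3, 0, p2 0;
     0, q2 1, 0, q2 3, 0, p2 1;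
     0, 0, q2 2, q2 3, 0, p2 2]

/-- Carlsson and Weinshall's 3×3 dual fundamental matrix `F(q₁,q₂)`. -/
def dualFund (q1 q2 : Fin 4 → ℂ) : Matrix (Fin 3) (Fin 3) ℂ :=
  !![0,
     q1 1 * q2 0 * (q1 3 * q2 2 - q1 2 * q2 3),
     q1 2 * q2 0 * (q1 1 * q2 3 - q1 3 * q2 1);
     q1 0 * q2 1 * (q1 2 * q2 3 - q1 3 * q2 2),
     0,
     q1 2 * q2 1 * (q1 3 * q2 0 - q1 0 * q2 3);
     q1 0 * q2 2 * (q1 3 * q2 1 - q1 1 * q2 3),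
     q1 1 * q2 2 * (q1 0 * q2 3 - q1 3 * q2 0),
     0]

set_option maxRecDepth 100000 in
set_option maxHeartbeats 4000000 in
/-- There is a sign `ε ∈ {1, −1}`, independent of the data, such that for all
`q₁, q₂ ∈ ℂ⁴` and `p₁, p₂ ∈ ℂ³`,
`det [A(q₁), p₁, 0; A(q₂), 0, p₂] = ε · p₁ᵀ · F(q₁,q₂) · p₂`. -/
theorem reduced_two_focal_eq_dual_fundamental :
    ∃ ε : ℂ, (ε = 1 ∨ ε = -1) ∧
      ∀ (q1 q2 : Fin 4 → ℂ) (p1 p2 : Fin 3 → ℂ),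
        (sixMat q1 q2 p1 p2).det = ε * (p1 ⬝ᵥ (dualFund q1 q2).mulVec p2) := by
  refine ⟨1, Or.inl rfl, fun q1 q2 p1 p2 => ?_⟩
  simp only [sixMat, dualFund]
  simp [Matrix.det_succ_row_zero, Fin.sum_univ_succ, Fin.succAbove,
    Fin.castSucc, Fin.castAdd, Fin.castLE, Fin.succ, Matrix.mulVec, dotProduct,
    show ((2:Fin 3).val = 2) from rfl, show ((2:Fin 4).val = 2) from rfl,
    show ((3:Fin 4).val = 3) from rfl, show ((2:Fin 5).val = 2) from rfl,
    show ((3:Fin 5).val = 3) from rfl, show ((4:Fin 5).val = 4) from rfl,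
    show ((2:Fin 6).val = 2) from rfl, show ((3:Fin 6).val = 3) from rfl,
    show ((4:Fin 6).val = 4) from rfl, show ((5:Fin 6).val = 5) from rfl]
  simp [Matrix.cons_val_succ, Matrix.vecHead, Matrix.vecTail,
    show ((5:Fin 6) = Fin.succ 4) from rfl, show ((4:Fin 6) = Fin.succ 3) from rfl,
    show ((3:Fin 6) = Fin.succ 2) from rfl,
    show ((4:Fin 5) = Fin.succ 3) from rfl, show ((3:Fin 5) = Fin.succ 2) from rfl,
    show ((3:Fin 4) = Fin.succ 2) from rfl]
  ring
end

section
/- For all q₁,…,q₆ ∈ ℂ⁴, p₁,…,p₆ ∈ ℂ³ and all scalars c₁,…,c₆, c₁′,…,c₆′ ∈ ℂ, the determinant of the 18×18 focal matrix satisfies det M(c₁q₁,…,c₆q₆; c₁′p₁,…,c₆′p₆) = (∏_{j=1}^{6} c_j²·c_j′) · det M(q₁,…,q₆; p₁,…,p₆). In particular, the 6-focal determinant is multihomogeneous of degree 2 in each q_j and degree 1 in each p_j, so its vanishing defines a well-defined multiprojective hypersurface. -/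
open Matrix

/-- Natural ordering of the 18 rows of the `n = 6` focal matrix. -/
def rowIdx : Fin 18 → Fin 6 × Fin 3 := fun k =>
  (⟨(k : ℕ) / 3, by have := k.isLt; omega⟩, ⟨(k : ℕ) % 3, by have := k.isLt; omega⟩)

/-- Natural ordering of the 18 columns of the `n = 6` focal matrix. -/
def colIdx : Fin 18 → (Fin 3 × Fin 4) ⊕ Fin 6 := fun k =>
  if h : (k : ℕ) < 12 then
    Sum.inl (⟨(k : ℕ) / 4, by omega⟩, ⟨(k : ℕ) % 4, by omega⟩)
  else Sum.inr ⟨(k : ℕ) - 12, by have := k.isLt; omega⟩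

/-- The determinant of the 18×18 focal matrix `M(q,p)` for `n = 6`. -/
def focalDet (q : Fin 6 → Fin 4 → ℂ) (p : Fin 6 → Fin 3 → ℂ) : ℂ :=
  ((focalMatrix 6 q p).submatrix rowIdx colIdx).det

lemma rowIdx_bijective : Function.Bijective rowIdx := by decide

lemma colIdx_bijective : Function.Bijective colIdx := by decide

/-- Generic diagonal sandwich determinant identity (kept at abstract types to
avoid expensive unification at `Fin 18`). -/
lemma det_diag_sandwich {m R : Type*} [Fintype m] [DecidableEq m] [CommRing R]
    (N N' : Matrix m m R) (d e : m → R)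
    (h : ∀ i j, N' i j = d i * N i j * e j) :
    N'.det = (∏ i, d i) * (∏ i, e i) * N.det := by
  have h' : N' = diagonal d * N * diagonal e := by
    ext i j
    rw [Matrix.mul_diagonal, Matrix.diagonal_mul, h]
  rw [h', det_mul, det_mul, det_diagonal, det_diagonal]; ring

/-- The key case: multihomogeneity when all `c j` are nonzero. -/
lemma focalDet_key (q : Fin 6 → Fin 4 → ℂ) (p : Fin 6 → Fin 3 → ℂ)
    (c c' : Fin 6 → ℂ) (hc : ∀ j, c j ≠ 0) :
    focalDet (fun j => c j • q j) (fun j => c' j • p j) =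
      (∏ j : Fin 6, (c j) ^ 2 * c' j) * focalDet q p := by
  set d : Fin 18 → ℂ := fun k => c (rowIdx k).1 with hd
  set e : Fin 18 → ℂ :=
    fun l => Sum.elim (fun _ => (1 : ℂ)) (fun j => c' j * (c j)⁻¹) (colIdx l) with he
  have hmat : ∀ k l,
      ((focalMatrix 6 (fun j => c j • q j) (fun j => c' j • p j)).submatrix rowIdx colIdx) k l
        = d k * (((focalMatrix 6 q p).submatrix rowIdx colIdx) k l) * e l := by
    intro k l
    simp only [submatrix_apply, hd, he]
    rcases hcl : colIdx l with ⟨a, b⟩ | j'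
    · simp only [focalMatrix, Matrix.of_apply, Sum.elim_inl, Pi.smul_apply, smul_eq_mul]
      split <;> ring
    · simp only [focalMatrix, Matrix.of_apply, Sum.elim_inr, Pi.smul_apply, smul_eq_mul]
      rcases eq_or_ne j' (rowIdx k).1 with h | h
      · subst h
        rw [if_pos rfl, if_pos rfl]
        have h0 := hc (rowIdx k).1
        field_simp
      · rw [if_neg h, if_neg h]
        ring
  have hdet := det_diag_sandwich
    ((focalMatrix 6 q p).submatrix rowIdx colIdx)
    ((focalMatrix 6 (fun j => c j • q j) (fun j => c' j • p j)).submatrix rowIdx colIdx)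
    d e hmat
  have h1 : (∏ k : Fin 18, d k) = ∏ ji : Fin 6 × Fin 3, c ji.1 :=
    Fintype.prod_bijective rowIdx rowIdx_bijective _ _ (fun k => rfl)
  have h2 : (∏ l : Fin 18, e l) =
      ∏ s : (Fin 3 × Fin 4) ⊕ Fin 6,
        Sum.elim (fun _ => (1 : ℂ)) (fun j => c' j * (c j)⁻¹) s :=
    Fintype.prod_bijective colIdx colIdx_bijective _ _ (fun l => rfl)
  have hprod : (∏ k : Fin 18, d k) * (∏ l : Fin 18, e l) = ∏ j : Fin 6, (c j) ^ 2 * c' j := by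
    rw [h1, h2, Fintype.prod_sum_type, Fintype.prod_prod_type]
    simp only [Sum.elim_inl, Sum.elim_inr, Finset.prod_const_one, Finset.prod_const,
      Finset.card_univ, Fintype.card_fin, one_mul]
    rw [← Finset.prod_mul_distrib]
    refine Finset.prod_congr rfl fun j _ => ?_
    have h0 := hc j
    field_simp
  calc focalDet (fun j => c j • q j) (fun j => c' j • p j)
      = ((focalMatrix 6 (fun j => c j • q j) (fun j => c' j • p j)).submatrix
          rowIdx colIdx).det := rfl
    _ = (∏ k : Fin 18, d k) * (∏ l : Fin 18, e l) *
          ((focalMatrix 6 q p).submatrix rowIdx colIdx).det := hdet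
    _ = (∏ j : Fin 6, (c j) ^ 2 * c' j) * focalDet q p := by rw [hprod]; rfl

/-- Generic: if two distinct rows are supported on a single common column,
the determinant vanishes. -/
lemma det_eq_zero_two_rows_one_col {m R : Type*} [Fintype m] [DecidableEq m] [CommRing R]
    (N : Matrix m m R) (k1 k2 l0 : m) (hk : k1 ≠ k2)
    (h1 : ∀ l, l ≠ l0 → N k1 l = 0) (h2 : ∀ l, l ≠ l0 → N k2 l = 0)
    (hdiv : N k1 l0 = 0 ∨ ∃ t, N k2 l0 = t * N k1 l0) :
    N.det = 0 := by
  rcases hdiv with ha | ⟨t, ht⟩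
  · refine det_eq_zero_of_row_eq_zero k1 fun l => ?_
    rcases eq_or_ne l l0 with rfl | h
    · exact ha
    · exact h1 l h
  · have hrow : N k2 = t • N k1 := by
      funext l
      rcases eq_or_ne l l0 with rfl | h
      · simpa using ht
      · simp [h1 l h, h2 l h]
    have h3 : N = N.updateRow k2 (t • N k1) := by
      rw [← hrow, updateRow_eq_self]
    rw [h3, det_updateRow_smul]
    have h4 : (N.updateRow k2 (N k1)).det = 0 := by
      refine det_zero_of_row_eq hk ?_
      rw [updateRow_self, updateRow_ne hk]
    rw [h4, mul_zero]

/-- The degenerate case: if some `c j₀ = 0`, the focal determinant of the scaled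
data vanishes. -/
lemma focalDet_zero (q : Fin 6 → Fin 4 → ℂ) (p : Fin 6 → Fin 3 → ℂ)
    (c c' : Fin 6 → ℂ) (j0 : Fin 6) (hc0 : c j0 = 0) :
    focalDet (fun j => c j • q j) (fun j => c' j • p j) = 0 := by
  have hj0 : (j0 : ℕ) < 6 := j0.isLt
  set k1 : Fin 18 := ⟨3 * j0, by omega⟩ with hk1
  set k2 : Fin 18 := ⟨3 * j0 + 1, by omega⟩ with hk2
  set l0 : Fin 18 := ⟨12 + j0, by omega⟩ with hl0
  have hrow1 : (rowIdx k1).1 = j0 := by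
    simp only [rowIdx, hk1]
    exact Fin.ext (by simp only [Fin.val_mk]; omega)
  have hrow2 : (rowIdx k2).1 = j0 := by
    simp only [rowIdx, hk2]
    exact Fin.ext (by simp only [Fin.val_mk]; omega)
  have hcol0 : colIdx l0 = Sum.inr j0 := by
    simp only [colIdx, hl0]
    rw [dif_neg (show ¬((12 : ℕ) + (j0 : ℕ) < 12) by omega)]
    exact congrArg Sum.inr (Fin.ext (show (12 : ℕ) + (j0 : ℕ) - 12 = (j0 : ℕ) by omega))
  have key : ∀ k : Fin 18, (rowIdx k).1 = j0 → ∀ l, l ≠ l0 →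
      ((focalMatrix 6 (fun j => c j • q j) (fun j => c' j • p j)).submatrix rowIdx colIdx) k l
        = 0 := by
    intro k hkj l hl
    simp only [submatrix_apply, focalMatrix, Matrix.of_apply]
    rcases hcl : colIdx l with ⟨a, b⟩ | j'
    · simp only [Sum.elim_inl, Pi.smul_apply, smul_eq_mul, hkj, hc0]
      split <;> ring
    · have hj' : j' ≠ j0 := by
        intro h
        apply hl
        apply colIdx_bijective.1
        rw [hcl, hcol0, h]
      simp only [Sum.elim_inr]
      rw [if_neg (by rw [hkj]; exact hj')]
  have hdet := det_eq_zero_two_rows_one_col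
    ((focalMatrix 6 (fun j => c j • q j) (fun j => c' j • p j)).submatrix rowIdx colIdx)
    k1 k2 l0
    (by simp [hk1, hk2, Fin.ext_iff]) (key k1 hrow1) (key k2 hrow2)
    (by
      by_cases h0 :
        ((focalMatrix 6 (fun j => c j • q j) (fun j => c' j • p j)).submatrix rowIdx colIdx)
          k1 l0 = 0
      · exact Or.inl h0
      · refine Or.inr ⟨((focalMatrix 6 (fun j => c j • q j) (fun j => c' j • p j)).submatrix
          rowIdx colIdx) k2 l0 /
          ((focalMatrix 6 (fun j => c j • q j) (fun j => c' j • p j)).submatrix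
          rowIdx colIdx) k1 l0, ?_⟩
        exact (div_mul_cancel₀ _ h0).symm)
  calc focalDet (fun j => c j • q j) (fun j => c' j • p j)
      = ((focalMatrix 6 (fun j => c j • q j) (fun j => c' j • p j)).submatrix
          rowIdx colIdx).det := rfl
    _ = 0 := hdet

/-- **Multihomogeneity of the 6-focal (eq. 2.13).** For all scalars `c_j, c_j'`,
`det M(c₁q₁,…,c₆q₆; c₁′p₁,…,c₆′p₆) = (∏_j c_j²·c_j′) · det M(q; p)`: the 6-focal
determinant is multihomogeneous of degree 2 in each `q_j` and degree 1 in each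
`p_j`, so its vanishing defines a multiprojective hypersurface. -/
theorem focalDet_multihomogeneous
    (q : Fin 6 → Fin 4 → ℂ) (p : Fin 6 → Fin 3 → ℂ) (c c' : Fin 6 → ℂ) :
    focalDet (fun j => c j • q j) (fun j => c' j • p j) =
      (∏ j : Fin 6, (c j) ^ 2 * c' j) * focalDet q p := by
  by_cases hc : ∀ j, c j ≠ 0
  · exact focalDet_key q p c c' hc
  · push_neg at hc
    obtain ⟨j0, hj0⟩ := hc
    rw [focalDet_zero q p c c' j0 hj0]
    rw [Finset.prod_eq_zero (Finset.mem_univ j0) (by rw [hj0]; ring), zero_mul]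
end

section
/- Let S₀ ∈ GL₄(ℂ) satisfy S₀·E₅ = μ·E₅ for some μ ∈ ℂ, where E₅ = (1,1,1,1)ᵀ (note μ ≠ 0 since S₀ is invertible). For q₁,…,q₄ ∈ ℂ⁴ let d_i(q₁,…,q₄) be the determinant of the 4×4 matrix with columns q₁,…,q₄ in which the i-th column is replaced by E₅, and let P(q₁,…,q₄) be the 4×4 matrix product (q₁ | q₂ | q₃ | q₄)·diag(d₁(q), d₂(q), d₃(q), d₄(q)). Then P(S₀q₁, S₀q₂, S₀q₃, S₀q₄) = μ⁻¹·det(S₀)·S₀·P(q₁,…,q₄). -/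
open Matrix

/-- `d_i(q₁,…,q₄)`: the determinant of the 4×4 matrix with columns `q₁,…,q₄` in
which the `i`-th column is replaced by `E₅ = (1,1,1,1)ᵀ`. -/
def dS (q : Fin 4 → Fin 4 → ℂ) (i : Fin 4) : ℂ :=
  (Matrix.of fun r c => if c = i then (1 : ℂ) else q c r).det

/-- `P(q₁,…,q₄) = (q₁ | q₂ | q₃ | q₄) · diag(d₁(q), d₂(q), d₃(q), d₄(q))`. -/
def PmatS (q : Fin 4 → Fin 4 → ℂ) : Matrix (Fin 4) (Fin 4) ℂ :=
  Matrix.of fun r c => q c r * dS q c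

lemma dS_eq_updateCol (q : Fin 4 → Fin 4 → ℂ) (i : Fin 4) :
    dS q i = ((Matrix.of fun r c => q c r).updateCol i (fun _ => 1)).det := by
  unfold dS
  congr 1
  ext r c
  by_cases h : c = i <;> simp [Matrix.updateCol_apply, h]

lemma dS_mulVec (S₀ : Matrix (Fin 4) (Fin 4) ℂ) (hS : IsUnit S₀)
    (μ : ℂ) (hμ : S₀.mulVec (fun _ => 1) = μ • (fun _ => (1 : ℂ)))
    (q : Fin 4 → Fin 4 → ℂ) (i : Fin 4) :
    dS (fun j => S₀.mulVec (q j)) i = μ⁻¹ * S₀.det * dS q i := by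
  have hμ0 : μ ≠ 0 := by
    intro h
    subst h
    have hinv : S₀⁻¹.mulVec (S₀.mulVec (fun _ => 1)) = (fun _ => (1:ℂ)) := by
      rw [Matrix.mulVec_mulVec, Matrix.nonsing_inv_mul _ (isUnit_iff_isUnit_det S₀ |>.mp hS), Matrix.one_mulVec]
    rw [hμ, zero_smul, Matrix.mulVec_zero] at hinv
    exact one_ne_zero (congrFun hinv 0).symm
  set N : Matrix (Fin 4) (Fin 4) ℂ :=
    (Matrix.of fun r c => q c r).updateCol i (fun _ => μ⁻¹) with hN
  have key : (Matrix.of fun r c => if c = i then (1 : ℂ) else S₀.mulVec (q c) r) = S₀ * N := by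
    ext r c
    by_cases h : c = i
    · subst h
      have : (S₀ * N) r c = μ⁻¹ * (S₀.mulVec (fun _ => 1)) r := by
        simp [Matrix.mul_apply, hN, Matrix.updateCol_apply, Matrix.mulVec, dotProduct,
          Finset.mul_sum, mul_comm]
      simp [this, hμ, inv_mul_cancel₀ hμ0]
    · simp [Matrix.mul_apply, hN, Matrix.updateCol_apply, h, Matrix.mulVec, dotProduct]
  have hdetN : N.det = μ⁻¹ * dS q i := by
    have : (fun _ : Fin 4 => μ⁻¹) = μ⁻¹ • (fun _ : Fin 4 => (1:ℂ)) := by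
      funext x; simp
    rw [hN, this, Matrix.det_updateCol_smul, ← dS_eq_updateCol]
  have h2 : dS (fun j => S₀.mulVec (q j)) i = (S₀ * N).det := by
    unfold dS; rw [key]
  rw [h2, Matrix.det_mul, hdetN]; ring

/-- **Equivariance of the world normalization (eq. 3.11).** If `S₀ ∈ GL₄(ℂ)`
satisfies `S₀·E₅ = μ·E₅`, then
`P(S₀q₁, S₀q₂, S₀q₃, S₀q₄) = μ⁻¹·det(S₀)·S₀·P(q₁,…,q₄)`. -/
theorem PmatS_equivariance (S₀ : Matrix (Fin 4) (Fin 4) ℂ) (hS : IsUnit S₀)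
    (μ : ℂ) (hμ : S₀.mulVec (fun _ => 1) = μ • (fun _ => (1 : ℂ)))
    (q : Fin 4 → Fin 4 → ℂ) :
    PmatS (fun i => S₀.mulVec (q i)) = (μ⁻¹ * S₀.det) • (S₀ * PmatS q) := by
  ext r c
  simp only [PmatS, Matrix.of_apply, Matrix.smul_apply, Matrix.mul_apply, smul_eq_mul,
    dS_mulVec S₀ hS μ hμ q]
  simp only [Matrix.mulVec, dotProduct]
  rw [Finset.mul_sum, Finset.sum_mul]
  congr 1
  funext k
  ring
end
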